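/- For c<d, ρ>0, α∈(0,1), the auxiliary function h(t) = (α+2)(t^ρ−c^ρ)^{1+α} − 2(α+4)/(d^ρ−c^ρ) (t^ρ−c^ρ)^{2+α} + (α+10)/(d^ρ−c^ρ)² (t^ρ−c^ρ)^{3+α} − 4/(d^ρ−c^ρ)³ (t^ρ−c^ρ)^{4+α} on [c,d] is of class C¹ and satisfies h(c)=h(d)=0, h'(c)=h'(d)=0, and ^CD_{c+}^{α,ρ}h(c)=^CD_{c+}^{α,ρ}h(d)=0. -/

import Mathlib

open Real MeasureTheory intervalIntegral Set

/-- Caputo–Katugampola fractional derivative (C¹ integral form). -/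
noncomputable def CKderiv (a α ρ : ℝ) (x : ℝ → ℝ) (t : ℝ) : ℝ :=
  ρ ^ α / Real.Gamma (1 - α) * ∫ τ in a..t, (t ^ ρ - τ ^ ρ) ^ (-α) * deriv x τ

/-- Caputo–Katugampola fractional derivative (definition form with d/dt outside). -/
noncomputable def CKderivDef (a α ρ : ℝ) (x : ℝ → ℝ) (t : ℝ) : ℝ :=
  ρ ^ α / Real.Gamma (1 - α) * t ^ (1 - ρ) *
    deriv (fun s => ∫ τ in a..s, τ ^ (ρ - 1) * (s ^ ρ - τ ^ ρ) ^ (-α) * (x τ - x a)) t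

/-- Katugampola fractional integral of order β. -/
noncomputable def KatInt (a β ρ : ℝ) (f : ℝ → ℝ) (t : ℝ) : ℝ :=
  ρ ^ (1 - β) / Real.Gamma β * ∫ τ in a..t, τ ^ (ρ - 1) * (t ^ ρ - τ ^ ρ) ^ (β - 1) * f τ

/-- Right-sided fractional integral type operator I_{b-}^{1-α,ρ}. -/
noncomputable def IrightCK (b α ρ : ℝ) (f : ℝ → ℝ) (t : ℝ) : ℝ :=
  ρ ^ α / Real.Gamma (1 - α) * ∫ τ in t..b, (τ ^ ρ - t ^ ρ) ^ (-α) * f τ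

/-- Right-sided fractional differential type operator D_{b-}^{α,ρ}. -/
noncomputable def DrightCK (b α ρ : ℝ) (f : ℝ → ℝ) (t : ℝ) : ℝ :=
  ρ ^ α / Real.Gamma (1 - α) *
    deriv (fun s => ∫ τ in s..b, (τ ^ ρ - s ^ ρ) ^ (-α) * f τ) t

/-- The variational functional J. -/
noncomputable def Jfun (a b α ρ : ℝ) (L : ℝ → ℝ → ℝ → ℝ) (x : ℝ → ℝ) : ℝ :=
  ∫ t in a..b, L t (x t) (CKderiv a α ρ x t)

/-- Distance coming from the norm ‖x‖ = max|x| + max|^CD x|. -/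
noncomputable def CKdist (a b α ρ : ℝ) (x y : ℝ → ℝ) : ℝ :=
  sSup ((fun t => |x t - y t|) '' Set.Icc a b) +
  sSup ((fun t => |CKderiv a α ρ x t - CKderiv a α ρ y t|) '' Set.Icc a b)

/-- Admissible functions: C¹ with fixed boundary values. -/
def Admissible (a b xa xb : ℝ) (x : ℝ → ℝ) : Prop :=
  ContDiffOn ℝ 1 x (Set.Icc a b) ∧ x a = xa ∧ x b = xb

section Aux

variable {c d α ρ : ℝ}

/-- derivative of the basic building block. -/
lemma aux_hasDerivAt (c : ℝ) {ρ p : ℝ} {t : ℝ} (hp : 1 ≤ p) (ht : 0 < t) :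
    HasDerivAt (fun s : ℝ => (s ^ ρ - c ^ ρ) ^ p)
      (p * (t ^ ρ - c ^ ρ) ^ (p - 1) * (ρ * t ^ (ρ - 1))) t := by
  have h1 : HasDerivAt (fun s : ℝ => s ^ ρ - c ^ ρ) (ρ * t ^ (ρ - 1)) t :=
    (Real.hasDerivAt_rpow_const (Or.inl ht.ne')).sub_const _
  exact (Real.hasDerivAt_rpow_const (Or.inr hp)).comp t h1

/-- explicit derivative of h. -/
noncomputable def Dh (c d α ρ t : ℝ) : ℝ :=
  (α + 2) * ((1 + α) * (t ^ ρ - c ^ ρ) ^ α * (ρ * t ^ (ρ - 1))) -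
  2 * (α + 4) / (d ^ ρ - c ^ ρ) * ((2 + α) * (t ^ ρ - c ^ ρ) ^ (1 + α) * (ρ * t ^ (ρ - 1))) +
  (α + 10) / (d ^ ρ - c ^ ρ) ^ (2 : ℕ) * ((3 + α) * (t ^ ρ - c ^ ρ) ^ (2 + α) * (ρ * t ^ (ρ - 1))) -
  4 / (d ^ ρ - c ^ ρ) ^ (3 : ℕ) * ((4 + α) * (t ^ ρ - c ^ ρ) ^ (3 + α) * (ρ * t ^ (ρ - 1)))

lemma hasDerivAt_h (hα0 : 0 < α) {t : ℝ} (ht : 0 < t) :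
    HasDerivAt (fun t : ℝ =>
      (α + 2) * (t ^ ρ - c ^ ρ) ^ (1 + α) -
      2 * (α + 4) / (d ^ ρ - c ^ ρ) * (t ^ ρ - c ^ ρ) ^ (2 + α) +
      (α + 10) / (d ^ ρ - c ^ ρ) ^ (2 : ℕ) * (t ^ ρ - c ^ ρ) ^ (3 + α) -
      4 / (d ^ ρ - c ^ ρ) ^ (3 : ℕ) * (t ^ ρ - c ^ ρ) ^ (4 + α))
      (Dh c d α ρ t) t := by
  have h1 := (aux_hasDerivAt (ρ := ρ) c (by linarith : (1:ℝ) ≤ 1 + α) ht).const_mul (α + 2)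
  have h2 := (aux_hasDerivAt (ρ := ρ) c (by linarith : (1:ℝ) ≤ 2 + α) ht).const_mul
    (2 * (α + 4) / (d ^ ρ - c ^ ρ))
  have h3 := (aux_hasDerivAt (ρ := ρ) c (by linarith : (1:ℝ) ≤ 3 + α) ht).const_mul
    ((α + 10) / (d ^ ρ - c ^ ρ) ^ (2 : ℕ))
  have h4 := (aux_hasDerivAt (ρ := ρ) c (by linarith : (1:ℝ) ≤ 4 + α) ht).const_mul
    (4 / (d ^ ρ - c ^ ρ) ^ (3 : ℕ))
  have H := ((h1.sub h2).add h3).sub h4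
  refine H.congr_deriv ?_
  unfold Dh
  rw [show (1:ℝ) + α - 1 = α by ring, show (2:ℝ) + α - 1 = 1 + α by ring,
    show (3:ℝ) + α - 1 = 2 + α by ring, show (4:ℝ) + α - 1 = 3 + α by ring]

lemma Dh_eq_zero (hα0 : 0 < α) {x : ℝ} (hx : 0 < x) (T : ℝ) :
    (α + 2) * ((1 + α) * x ^ α * T) -
    2 * (α + 4) / x * ((2 + α) * x ^ (1 + α) * T) +
    (α + 10) / x ^ (2 : ℕ) * ((3 + α) * x ^ (2 + α) * T) -
    4 / x ^ (3 : ℕ) * ((4 + α) * x ^ (3 + α) * T) = 0 := by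
  rw [Real.rpow_add hx 1 α, Real.rpow_add hx 2 α, Real.rpow_add hx 3 α, Real.rpow_one,
    show ((2:ℝ)) = ((2:ℕ):ℝ) by norm_num, show ((3:ℝ)) = ((3:ℕ):ℝ) by norm_num,
    Real.rpow_natCast, Real.rpow_natCast]
  field_simp
  ring


noncomputable def Faux (c d α ρ : ℝ) : ℝ → ℝ := fun t =>
  (d ^ ρ - t ^ ρ) ^ (1 - α) * ((t ^ ρ - c ^ ρ) ^ (1 + α) *
    ((α + 2) / (d ^ ρ - c ^ ρ) - 2 * (3 + α) / (d ^ ρ - c ^ ρ) ^ (2:ℕ) * (t ^ ρ - c ^ ρ) +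
      (4 + α) / (d ^ ρ - c ^ ρ) ^ (3:ℕ) * (t ^ ρ - c ^ ρ) ^ (2:ℕ)))

noncomputable def Gaux (c d α ρ : ℝ) : ℝ → ℝ := fun t =>
  ρ * t ^ (ρ - 1) * ((t ^ ρ - c ^ ρ) ^ α * ((d ^ ρ - t ^ ρ) ^ (1 - α) *
    ((α + 2) * (1 + α) / (d ^ ρ - c ^ ρ) +
      ((α + 2) * (1 + α) - 2 * (α + 4) * (2 + α)) / (d ^ ρ - c ^ ρ) ^ (2:ℕ) * (t ^ ρ - c ^ ρ) +
      4 * (4 + α) / (d ^ ρ - c ^ ρ) ^ (3:ℕ) * (t ^ ρ - c ^ ρ) ^ (2:ℕ))))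

lemma Faux_hasDerivAt {c d α ρ : ℝ} (hc : 0 < c) (hcd : c < d) (hα0 : 0 < α) (hα1 : α < 1)
    (hρ : 0 < ρ) {t : ℝ} (ht : t ∈ Set.Ioo c d) :
    HasDerivAt (Faux c d α ρ) (Gaux c d α ρ t) t := by
  have ht0 : 0 < t := hc.trans ht.1
  have hv : 0 < t ^ ρ - c ^ ρ := sub_pos.2 (Real.rpow_lt_rpow hc.le ht.1 hρ)
  have hw : 0 < d ^ ρ - t ^ ρ := sub_pos.2 (Real.rpow_lt_rpow ht0.le ht.2 hρ)
  have hU : 0 < d ^ ρ - c ^ ρ := sub_pos.2 (Real.rpow_lt_rpow hc.le hcd hρ)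
  have HvD : HasDerivAt (fun s : ℝ => s ^ ρ - c ^ ρ) (ρ * t ^ (ρ - 1)) t :=
    (Real.hasDerivAt_rpow_const (Or.inl ht0.ne')).sub_const _
  have HwD : HasDerivAt (fun s : ℝ => d ^ ρ - s ^ ρ) (-(ρ * t ^ (ρ - 1))) t :=
    (Real.hasDerivAt_rpow_const (Or.inl ht0.ne')).const_sub _
  have H1 : HasDerivAt (fun s : ℝ => (d ^ ρ - s ^ ρ) ^ (1 - α))
      ((1 - α) * (d ^ ρ - t ^ ρ) ^ (1 - α - 1) * -(ρ * t ^ (ρ - 1))) t :=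
    by have := (Real.hasDerivAt_rpow_const (p := 1 - α) (Or.inl hw.ne')).comp t HwD; exact this
  have H2 : HasDerivAt (fun s : ℝ => (s ^ ρ - c ^ ρ) ^ (1 + α))
      ((1 + α) * (t ^ ρ - c ^ ρ) ^ (1 + α - 1) * (ρ * t ^ (ρ - 1))) t :=
    by have := (Real.hasDerivAt_rpow_const (p := 1 + α) (Or.inl hv.ne')).comp t HvD; exact this
  have H3 : HasDerivAt (fun s : ℝ =>
      (α + 2) / (d ^ ρ - c ^ ρ) - 2 * (3 + α) / (d ^ ρ - c ^ ρ) ^ (2:ℕ) * (s ^ ρ - c ^ ρ) +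
        (4 + α) / (d ^ ρ - c ^ ρ) ^ (3:ℕ) * (s ^ ρ - c ^ ρ) ^ (2:ℕ))
      (-(2 * (3 + α) / (d ^ ρ - c ^ ρ) ^ (2:ℕ) * (ρ * t ^ (ρ - 1))) +
        (4 + α) / (d ^ ρ - c ^ ρ) ^ (3:ℕ) *
          ((2:ℕ) * (t ^ ρ - c ^ ρ) ^ (1:ℕ) * (ρ * t ^ (ρ - 1)))) t := by
    have := ((hasDerivAt_const t ((α + 2) / (d ^ ρ - c ^ ρ))).sub
      (HvD.const_mul (2 * (3 + α) / (d ^ ρ - c ^ ρ) ^ (2:ℕ)))).add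
      ((HvD.pow 2).const_mul ((4 + α) / (d ^ ρ - c ^ ρ) ^ (3:ℕ)))
    refine this.congr_deriv ?_
    ring
  have H := H1.mul (H2.mul H3)
  have ev : (t ^ ρ - c ^ ρ) ^ (1 + α) = (t ^ ρ - c ^ ρ) * (t ^ ρ - c ^ ρ) ^ α := by
    rw [Real.rpow_add hv 1 α, Real.rpow_one]
  have ew : (d ^ ρ - t ^ ρ) ^ (1 - α) = (d ^ ρ - t ^ ρ) * (d ^ ρ - t ^ ρ) ^ (-α) := by
    rw [show (1:ℝ) - α = 1 + -α by ring, Real.rpow_add hw 1 (-α), Real.rpow_one]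
  unfold Faux Gaux
  refine H.congr_deriv ?_
  rw [show (1:ℝ) - α - 1 = -α by ring, show (1:ℝ) + α - 1 = α by ring]
  simp only [ev, ew, Pi.mul_apply]
  field_simp
  ring


lemma integrand_eq {c d α ρ : ℝ} (hc : 0 < c) (hcd : c < d) (hα0 : 0 < α) (hα1 : α < 1)
    (hρ : 0 < ρ) {τ : ℝ} (hτ : τ ∈ Set.Icc c d) :
    (d ^ ρ - τ ^ ρ) ^ (-α) * Dh c d α ρ τ = Gaux c d α ρ τ := by
  have hτ0 : 0 < τ := lt_of_lt_of_le hc hτ.1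
  have hU : 0 < d ^ ρ - c ^ ρ := sub_pos.2 (Real.rpow_lt_rpow hc.le hcd hρ)
  rcases eq_or_lt_of_le hτ.2 with heq | hlt
  · have hvU : τ ^ ρ - c ^ ρ = d ^ ρ - c ^ ρ := by rw [heq]
    have hww : d ^ ρ - τ ^ ρ = 0 := by rw [heq, sub_self]
    have hDh : Dh c d α ρ τ = 0 := by
      unfold Dh
      rw [hvU, Real.rpow_add hU 1 α, Real.rpow_add hU 2 α, Real.rpow_add hU 3 α, Real.rpow_one,
        show ((2:ℝ)) = ((2:ℕ):ℝ) by norm_num, show ((3:ℝ)) = ((3:ℕ):ℝ) by norm_num,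
        Real.rpow_natCast, Real.rpow_natCast]
      field_simp
      ring
    rw [hDh, mul_zero]
    unfold Gaux
    rw [hww, Real.zero_rpow (by intro hcon; linarith : (1:ℝ) - α ≠ 0)]
    ring
  · have hw : 0 < d ^ ρ - τ ^ ρ := sub_pos.2 (Real.rpow_lt_rpow hτ0.le hlt hρ)
    have hv : 0 ≤ τ ^ ρ - c ^ ρ := sub_nonneg.2 (Real.rpow_le_rpow hc.le hτ.1 hρ.le)
    have ev1 : (τ ^ ρ - c ^ ρ) ^ (1 + α) = (τ ^ ρ - c ^ ρ) * (τ ^ ρ - c ^ ρ) ^ α := by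
      rw [Real.rpow_add' hv (by positivity : (1:ℝ) + α ≠ 0), Real.rpow_one]
    have ev2 : (τ ^ ρ - c ^ ρ) ^ (2 + α) = (τ ^ ρ - c ^ ρ) ^ (2:ℕ) * (τ ^ ρ - c ^ ρ) ^ α := by
      rw [Real.rpow_add' hv (by positivity : (2:ℝ) + α ≠ 0),
        show ((2:ℝ)) = ((2:ℕ):ℝ) by norm_num, Real.rpow_natCast]
    have ev3 : (τ ^ ρ - c ^ ρ) ^ (3 + α) = (τ ^ ρ - c ^ ρ) ^ (3:ℕ) * (τ ^ ρ - c ^ ρ) ^ α := by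
      rw [Real.rpow_add' hv (by positivity : (3:ℝ) + α ≠ 0),
        show ((3:ℝ)) = ((3:ℕ):ℝ) by norm_num, Real.rpow_natCast]
    have ew : (d ^ ρ - τ ^ ρ) ^ (1 - α) = (d ^ ρ - τ ^ ρ) * (d ^ ρ - τ ^ ρ) ^ (-α) := by
      rw [show (1:ℝ) - α = 1 + -α by ring, Real.rpow_add hw 1 (-α), Real.rpow_one]
    unfold Dh Gaux
    rw [ev1, ev2, ev3, ew]
    field_simp
    ring

lemma int_zero {c d α ρ : ℝ} (hc : 0 < c) (hcd : c < d) (hα0 : 0 < α) (hα1 : α < 1)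
    (hρ : 0 < ρ) :
    ∫ τ in c..d, (d ^ ρ - τ ^ ρ) ^ (-α) * Dh c d α ρ τ = 0 := by
  have hU : 0 < d ^ ρ - c ^ ρ := sub_pos.2 (Real.rpow_lt_rpow hc.le hcd hρ)
  have hcongr : Set.EqOn (fun τ => (d ^ ρ - τ ^ ρ) ^ (-α) * Dh c d α ρ τ)
      (Gaux c d α ρ) (Set.uIcc c d) := by
    rw [Set.uIcc_of_le hcd.le]
    intro τ hτ
    exact integrand_eq hc hcd hα0 hα1 hρ hτ
  have hGcont : ContinuousOn (Gaux c d α ρ) (Set.uIcc c d) := by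
    rw [Set.uIcc_of_le hcd.le]
    intro t ht
    have ht0 : 0 < t := lt_of_lt_of_le hc ht.1
    have h1 : ContinuousAt (fun s : ℝ => s ^ ρ) t :=
      Real.continuousAt_rpow_const t ρ (Or.inl ht0.ne')
    have h2 : ContinuousAt (fun s : ℝ => s ^ (ρ - 1)) t :=
      Real.continuousAt_rpow_const t (ρ - 1) (Or.inl ht0.ne')
    have hvb : ContinuousAt (fun s : ℝ => s ^ ρ - c ^ ρ) t := h1.sub continuousAt_const
    have hwb : ContinuousAt (fun s : ℝ => d ^ ρ - s ^ ρ) t := continuousAt_const.sub h1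
    have hpoly : ContinuousAt (fun s : ℝ =>
        (α + 2) * (1 + α) / (d ^ ρ - c ^ ρ) +
        ((α + 2) * (1 + α) - 2 * (α + 4) * (2 + α)) / (d ^ ρ - c ^ ρ) ^ (2:ℕ) * (s ^ ρ - c ^ ρ) +
        4 * (4 + α) / (d ^ ρ - c ^ ρ) ^ (3:ℕ) * (s ^ ρ - c ^ ρ) ^ (2:ℕ)) t :=
      (continuousAt_const.add (continuousAt_const.mul hvb)).add
        (continuousAt_const.mul (hvb.pow 2))
    have hbig : ContinuousAt (Gaux c d α ρ) t :=
      (continuousAt_const.mul h2).mul ((hvb.rpow_const (Or.inr hα0.le)).mul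
        ((hwb.rpow_const (Or.inr (by linarith))).mul hpoly))
    exact hbig.continuousWithinAt
  have hFcont : ContinuousOn (Faux c d α ρ) (Set.Icc c d) := by
    intro t ht
    have ht0 : 0 < t := lt_of_lt_of_le hc ht.1
    have h1 : ContinuousAt (fun s : ℝ => s ^ ρ) t :=
      Real.continuousAt_rpow_const t ρ (Or.inl ht0.ne')
    have hvb : ContinuousAt (fun s : ℝ => s ^ ρ - c ^ ρ) t := h1.sub continuousAt_const
    have hwb : ContinuousAt (fun s : ℝ => d ^ ρ - s ^ ρ) t := continuousAt_const.sub h1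
    have hpoly : ContinuousAt (fun s : ℝ =>
        (α + 2) / (d ^ ρ - c ^ ρ) -
        2 * (3 + α) / (d ^ ρ - c ^ ρ) ^ (2:ℕ) * (s ^ ρ - c ^ ρ) +
        (4 + α) / (d ^ ρ - c ^ ρ) ^ (3:ℕ) * (s ^ ρ - c ^ ρ) ^ (2:ℕ)) t :=
      (continuousAt_const.sub (continuousAt_const.mul hvb)).add
        (continuousAt_const.mul (hvb.pow 2))
    have hbig : ContinuousAt (Faux c d α ρ) t :=
      (hwb.rpow_const (Or.inr (by linarith))).mul
        ((hvb.rpow_const (Or.inr (by linarith))).mul hpoly)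
    exact hbig.continuousWithinAt
  have hGint : IntervalIntegrable (Gaux c d α ρ) volume c d := hGcont.intervalIntegrable
  rw [intervalIntegral.integral_congr hcongr,
    intervalIntegral.integral_eq_sub_of_hasDerivAt_of_le hcd.le hFcont
      (fun x hx => Faux_hasDerivAt hc hcd hα0 hα1 hρ hx) hGint]
  have hFc : Faux c d α ρ c = 0 := by
    unfold Faux
    rw [sub_self, Real.zero_rpow (by positivity : (1:ℝ) + α ≠ 0)]
    ring
  have hFd : Faux c d α ρ d = 0 := by
    unfold Faux
    rw [sub_self, Real.zero_rpow (by intro hcon; linarith : (1:ℝ) - α ≠ 0)]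
    ring
  rw [hFc, hFd, sub_zero]

end Aux

theorem stmt13 (c d α ρ : ℝ) (hc : 0 < c) (hcd : c < d) (hα : α ∈ Set.Ioo (0:ℝ) 1)
    (hρ : 0 < ρ) (h : ℝ → ℝ)
    (hh : ∀ t, h t =
      (α + 2) * (t ^ ρ - c ^ ρ) ^ (1 + α) -
      2 * (α + 4) / (d ^ ρ - c ^ ρ) * (t ^ ρ - c ^ ρ) ^ (2 + α) +
      (α + 10) / (d ^ ρ - c ^ ρ) ^ (2:ℕ) * (t ^ ρ - c ^ ρ) ^ (3 + α) -
      4 / (d ^ ρ - c ^ ρ) ^ (3:ℕ) * (t ^ ρ - c ^ ρ) ^ (4 + α)) :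
    ContDiffOn ℝ 1 h (Set.Icc c d) ∧
    h c = 0 ∧ h d = 0 ∧ deriv h c = 0 ∧ deriv h d = 0 ∧
    CKderiv c α ρ h c = 0 ∧ CKderiv c α ρ h d = 0 := by
  obtain ⟨hα0, hα1⟩ := hα
  have hfun : h = fun t =>
      (α + 2) * (t ^ ρ - c ^ ρ) ^ (1 + α) -
      2 * (α + 4) / (d ^ ρ - c ^ ρ) * (t ^ ρ - c ^ ρ) ^ (2 + α) +
      (α + 10) / (d ^ ρ - c ^ ρ) ^ (2:ℕ) * (t ^ ρ - c ^ ρ) ^ (3 + α) -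
      4 / (d ^ ρ - c ^ ρ) ^ (3:ℕ) * (t ^ ρ - c ^ ρ) ^ (4 + α) := funext hh
  subst hfun
  have hd0 : 0 < d := hc.trans hcd
  have hUpos : 0 < d ^ ρ - c ^ ρ :=
    sub_pos.2 (Real.rpow_lt_rpow hc.le hcd hρ)
  have h1ne : (1:ℝ) + α ≠ 0 := by positivity
  have h2ne : (2:ℝ) + α ≠ 0 := by positivity
  have h3ne : (3:ℝ) + α ≠ 0 := by positivity
  have h4ne : (4:ℝ) + α ≠ 0 := by positivity
  refine ⟨?_, ?_, ?_, ?_, ?_, ?_, ?_⟩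
  · -- ContDiffOn
    intro t ht
    have ht0 : 0 < t := lt_of_lt_of_le hc ht.1
    have hv : ContDiffAt ℝ 1 (fun s : ℝ => s ^ ρ - c ^ ρ) t :=
      (Real.contDiffAt_rpow_const_of_ne ht0.ne').sub contDiffAt_const
    have e1 : ContDiffAt ℝ 1 (fun s : ℝ => (s ^ ρ - c ^ ρ) ^ (1 + α)) t :=
      (Real.contDiffAt_rpow_const_of_le (n := 1) (by norm_num; linarith)).comp t hv
    have e2 : ContDiffAt ℝ 1 (fun s : ℝ => (s ^ ρ - c ^ ρ) ^ (2 + α)) t :=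
      (Real.contDiffAt_rpow_const_of_le (n := 1) (by norm_num; linarith)).comp t hv
    have e3 : ContDiffAt ℝ 1 (fun s : ℝ => (s ^ ρ - c ^ ρ) ^ (3 + α)) t :=
      (Real.contDiffAt_rpow_const_of_le (n := 1) (by norm_num; linarith)).comp t hv
    have e4 : ContDiffAt ℝ 1 (fun s : ℝ => (s ^ ρ - c ^ ρ) ^ (4 + α)) t :=
      (Real.contDiffAt_rpow_const_of_le (n := 1) (by norm_num; linarith)).comp t hv
    exact (((((contDiffAt_const.mul e1).sub (contDiffAt_const.mul e2)).add
      (contDiffAt_const.mul e3)).sub (contDiffAt_const.mul e4))).contDiffWithinAt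
  · -- h c = 0
    simp [sub_self, Real.zero_rpow h1ne, Real.zero_rpow h2ne, Real.zero_rpow h3ne,
      Real.zero_rpow h4ne]
  · -- h d = 0
    show (α + 2) * (d ^ ρ - c ^ ρ) ^ (1 + α) -
      2 * (α + 4) / (d ^ ρ - c ^ ρ) * (d ^ ρ - c ^ ρ) ^ (2 + α) +
      (α + 10) / (d ^ ρ - c ^ ρ) ^ (2:ℕ) * (d ^ ρ - c ^ ρ) ^ (3 + α) -
      4 / (d ^ ρ - c ^ ρ) ^ (3:ℕ) * (d ^ ρ - c ^ ρ) ^ (4 + α) = 0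
    rw [show (2:ℝ) + α = 1 + (1 + α) by ring, show (3:ℝ) + α = 2 + (1 + α) by ring,
      show (4:ℝ) + α = 3 + (1 + α) by ring,
      Real.rpow_add hUpos 1 (1 + α), Real.rpow_add hUpos 2 (1 + α),
      Real.rpow_add hUpos 3 (1 + α), Real.rpow_one,
      show ((2:ℝ)) = ((2:ℕ):ℝ) by norm_num, show ((3:ℝ)) = ((3:ℕ):ℝ) by norm_num,
      Real.rpow_natCast, Real.rpow_natCast]
    field_simp
    ring
  · -- deriv h c = 0
    rw [(hasDerivAt_h hα0 hc).deriv]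
    unfold Dh
    simp [sub_self, Real.zero_rpow hα0.ne', Real.zero_rpow h1ne, Real.zero_rpow h2ne,
      Real.zero_rpow h3ne]
  · -- deriv h d = 0
    rw [(hasDerivAt_h hα0 hd0).deriv]
    unfold Dh
    exact Dh_eq_zero hα0 hUpos _
  · -- CKderiv at c
    unfold CKderiv
    rw [intervalIntegral.integral_same, mul_zero]
  · -- CKderiv at d
    unfold CKderiv
    have h1 : Set.EqOn
        (fun τ => (d ^ ρ - τ ^ ρ) ^ (-α) * deriv (fun t : ℝ =>
          (α + 2) * (t ^ ρ - c ^ ρ) ^ (1 + α) -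
          2 * (α + 4) / (d ^ ρ - c ^ ρ) * (t ^ ρ - c ^ ρ) ^ (2 + α) +
          (α + 10) / (d ^ ρ - c ^ ρ) ^ (2:ℕ) * (t ^ ρ - c ^ ρ) ^ (3 + α) -
          4 / (d ^ ρ - c ^ ρ) ^ (3:ℕ) * (t ^ ρ - c ^ ρ) ^ (4 + α)) τ)
        (fun τ => (d ^ ρ - τ ^ ρ) ^ (-α) * Dh c d α ρ τ) (Set.uIcc c d) := by
      rw [Set.uIcc_of_le hcd.le]
      intro τ hτ
      simp only
      rw [(hasDerivAt_h hα0 (lt_of_lt_of_le hc hτ.1)).deriv]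
    rw [intervalIntegral.integral_congr h1, int_zero hc hcd hα0 hα1 hρ, mul_zero]
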